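/- Let m ≥ 1, ε ≥ 0, and let F : ℝ^m → ℝ be such that for each index k, when all variables other than φ_k are fixed, the resulting single-variable function is of the form a + b·cos φ_k + c·sin φ_k (with coefficients depending on the other variables). Assume that F(φ_c) ∈ {−1, 0, 1} for every Clifford point φ_c ∈ {0, π/2, π, 3π/2}^m, and that the mean of F² over [0,2π]^m is at most ε. Fix an index k and define the gradient component via the parameter shift G_k(φ) = (1/2)·F(φ + (π/2)·e_k) − (1/2)·F(φ − (π/2)·e_k), where e_k is the k-th standard basis vector (so that G_k = ∂F/∂φ_k). Then the fraction of Clifford points at which G_k is nonzero is at most 4ε: |{φ_c ∈ {0, π/2, π, 3π/2}^m : G_k(φ_c) ≠ 0}| / 4^m ≤ 4ε. -/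

import Mathlib

open Real MeasureTheory intervalIntegral

lemma quadsum (a b c : ℝ) :
    ∑ j : Fin 4, (a + b * Real.cos (((j:ℕ):ℝ) * (π/2)) + c * Real.sin (((j:ℕ):ℝ) * (π/2))) ^ 2
      = 4 * a^2 + 2 * b^2 + 2 * c^2 := by
  rw [Fin.sum_univ_four]
  rw [show ((0:Fin 4):ℕ) = 0 from rfl, show ((1:Fin 4):ℕ) = 1 from rfl,
      show ((2:Fin 4):ℕ) = 2 from rfl, show ((3:Fin 4):ℕ) = 3 from rfl]
  push_cast
  rw [show (3:ℝ) * (π/2) = π + π/2 by ring, show (2:ℝ) * (π/2) = π by ring]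
  norm_num [Real.cos_pi_div_two, Real.sin_pi_div_two, Real.cos_pi, Real.sin_pi,
    Real.cos_add, Real.sin_add]
  ring

lemma quadint (a b c : ℝ) :
    ∫ t in Set.Icc (0:ℝ) (2 * π), (a + b * Real.cos t + c * Real.sin t) ^ 2
      = (π / 2) * (4 * a^2 + 2 * b^2 + 2 * c^2) := by
  have h2π : (0:ℝ) ≤ 2 * π := by positivity
  rw [MeasureTheory.integral_Icc_eq_integral_Ioc, ← intervalIntegral.integral_of_le h2π]
  have key : ∀ t : ℝ, (a + b * Real.cos t + c * Real.sin t) ^ 2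
      = a^2 + (b^2) * Real.cos t ^ 2 + (c^2) * Real.sin t ^2 + (2*a*b) * Real.cos t
        + (2*a*c) * Real.sin t + (2*b*c) * (Real.sin t * Real.cos t) := by
    intro t; ring
  simp_rw [key]
  have icos2 : IntervalIntegrable (fun t => (b^2) * Real.cos t ^ 2) volume 0 (2*π) :=
    by apply Continuous.intervalIntegrable; fun_prop
  have isin2 : IntervalIntegrable (fun t => (c^2) * Real.sin t ^ 2) volume 0 (2*π) :=
    by apply Continuous.intervalIntegrable; fun_prop
  have icos : IntervalIntegrable (fun t => (2*a*b) * Real.cos t) volume 0 (2*π) :=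
    by apply Continuous.intervalIntegrable; fun_prop
  have isin : IntervalIntegrable (fun t => (2*a*c) * Real.sin t) volume 0 (2*π) :=
    by apply Continuous.intervalIntegrable; fun_prop
  have isc : IntervalIntegrable (fun t => (2*b*c) * (Real.sin t * Real.cos t)) volume 0 (2*π) :=
    by apply Continuous.intervalIntegrable; fun_prop
  have iconst : IntervalIntegrable (fun _ : ℝ => a^2) volume 0 (2*π) :=
    intervalIntegrable_const
  rw [intervalIntegral.integral_add (((((iconst.add icos2).add isin2).add icos).add isin)) isc,
      intervalIntegral.integral_add ((((iconst.add icos2).add isin2).add icos)) isin,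
      intervalIntegral.integral_add (((iconst.add icos2).add isin2)) icos,
      intervalIntegral.integral_add ((iconst.add icos2)) isin2,
      intervalIntegral.integral_add iconst icos2]
  rw [intervalIntegral.integral_const, intervalIntegral.integral_const_mul,
      intervalIntegral.integral_const_mul, intervalIntegral.integral_const_mul,
      intervalIntegral.integral_const_mul, intervalIntegral.integral_const_mul,
      integral_cos_sq, integral_sin_sq, integral_cos, integral_sin, integral_sin_mul_cos₁]
  simp [Real.sin_two_pi, Real.cos_two_pi]
  ring

lemma continuous_conspt (n : ℕ) (t : ℝ) :
    Continuous (fun y : Fin n → ℝ => (Fin.cons t y : Fin (n+1) → ℝ)) := by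
  apply continuous_pi
  intro i
  refine Fin.cases ?_ ?_ i
  · simpa using continuous_const
  · intro j; simpa using continuous_apply j

lemma quadn (n : ℕ) (F : (Fin n → ℝ) → ℝ) (hFc : Continuous F)
    (hF : ∀ (k : Fin n) (φ : Fin n → ℝ), ∃ a b c : ℝ, ∀ t : ℝ,
      F (Function.update φ k t) = a + b * Real.cos t + c * Real.sin t) :
    ∫ φ in Set.univ.pi (fun _ : Fin n => Set.Icc (0:ℝ) (2 * π)), F φ ^ 2
      = (π/2)^n * ∑ c : Fin n → Fin 4, F (fun j => ((c j : ℕ) : ℝ) * (π/2)) ^ 2 := by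
  induction n with
  | zero =>
      have huniv : Set.univ.pi (fun _ : Fin 0 => Set.Icc (0:ℝ) (2 * π)) = Set.univ := by
        ext x; simp
      rw [huniv, setIntegral_univ, integral_unique]
      have : (volume : Measure (Fin 0 → ℝ)) Set.univ = 1 := by
        rw [volume_pi, Measure.pi_univ]; simp
      rw [Measure.real, this]
      simp only [ENNReal.toReal_one, one_smul, pow_zero, one_mul]
      rw [Finset.sum_eq_single_of_mem (fun _ => 0) (Finset.mem_univ _)]
      · exact congrArg (fun z => F z ^ 2) (Subsingleton.elim _ _)
      · intro b _ hb; exact absurd (Subsingleton.elim b _) hb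
  | succ n ih =>
      set e := MeasurableEquiv.piFinSuccAbove (fun _ : Fin (n+1) => ℝ) 0 with he
      have mp : MeasurePreserving e (volume : Measure (Fin (n+1) → ℝ))
          ((volume : Measure ℝ).prod (volume : Measure (Fin n → ℝ))) := by
        have h := measurePreserving_piFinSuccAbove (fun _ : Fin (n+1) => (volume : Measure ℝ)) 0
        simpa [← volume_pi, he] using h
      -- the set correspondence
      have hset : e ⁻¹' ((Set.Icc (0:ℝ) (2*π)) ×ˢ (Set.univ.pi (fun _ : Fin n => Set.Icc (0:ℝ) (2*π))))
          = Set.univ.pi (fun _ : Fin (n+1) => Set.Icc (0:ℝ) (2 * π)) := by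
        ext x
        simp only [Set.mem_preimage, Set.mem_prod, Set.mem_univ_pi,
          MeasurableEquiv.piFinSuccAbove_apply, he]
        constructor
        · rintro ⟨h0, hs⟩ i
          refine Fin.cases h0 (fun j => ?_) i
          simpa [Fin.tail] using hs j
        · intro h
          exact ⟨h 0, fun j => h _⟩
      have key : ∫ φ in Set.univ.pi (fun _ : Fin (n+1) => Set.Icc (0:ℝ) (2 * π)), F φ ^ 2
          = ∫ p in (Set.Icc (0:ℝ) (2*π)) ×ˢ (Set.univ.pi (fun _ : Fin n => Set.Icc (0:ℝ) (2*π))),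
              F (Fin.cons p.1 p.2) ^ 2 ∂((volume : Measure ℝ).prod (volume : Measure (Fin n → ℝ))) := by
        rw [← mp.setIntegral_preimage_emb (MeasurableEquiv.measurableEmbedding e), hset]
        congr 1
        ext x
        congr 2
        have : (Fin.cons (e x).1 (e x).2 : Fin (n+1) → ℝ) = x := by
          ext i
          refine Fin.cases ?_ (fun j => ?_) i
          · simp [he]
          · simp only [he, MeasurableEquiv.piFinSuccAbove_apply, Fin.cons_succ]
            rfl
        rw [this]
      set S := Set.univ.pi (fun _ : Fin n => Set.Icc (0:ℝ) (2*π)) with hS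
      set I := Set.Icc (0:ℝ) (2*π) with hI
      have hcont2 : Continuous (fun q : (Fin n → ℝ) × ℝ => F (Fin.cons q.2 q.1)) := by
        apply hFc.comp
        apply continuous_pi
        intro i
        refine Fin.cases ?_ (fun j => ?_) i
        · simpa using continuous_snd
        · have hj : Continuous fun q : (Fin n → ℝ) × ℝ => q.1 j := (continuous_apply j).comp continuous_fst
          simpa using hj
      have hswap : ∫ p in I ×ˢ S, F (Fin.cons p.1 p.2) ^ 2
            ∂((volume : Measure ℝ).prod (volume : Measure (Fin n → ℝ)))
          = ∫ q in S ×ˢ I, F (Fin.cons q.2 q.1) ^ 2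
            ∂((volume : Measure (Fin n → ℝ)).prod (volume : Measure ℝ)) := by
        have mps : MeasurePreserving (Prod.swap : (Fin n → ℝ) × ℝ → ℝ × (Fin n → ℝ))
            ((volume : Measure (Fin n → ℝ)).prod volume)
            ((volume : Measure ℝ).prod volume) := MeasureTheory.Measure.measurePreserving_swap
        have := mps.setIntegral_preimage_emb
          (MeasurableEquiv.prodComm.measurableEmbedding :
            MeasurableEmbedding (Prod.swap : (Fin n → ℝ) × ℝ → ℝ × (Fin n → ℝ)))
          (fun p : ℝ × (Fin n → ℝ) => F (Fin.cons p.1 p.2) ^ 2) (I ×ˢ S)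
        rw [← this]
        congr 1
        ext q
        simp [Set.mem_prod, and_comm]
      have hIntOn : IntegrableOn (fun q : (Fin n → ℝ) × ℝ => F (Fin.cons q.2 q.1) ^ 2) (S ×ˢ I)
          ((volume : Measure (Fin n → ℝ)).prod (volume : Measure ℝ)) := by
        rw [← MeasureTheory.Measure.volume_eq_prod]
        exact ((hcont2.pow 2).continuousOn).integrableOn_compact
          ((isCompact_univ_pi fun _ => isCompact_Icc).prod isCompact_Icc)
      have hprod : ∫ q in S ×ˢ I, F (Fin.cons q.2 q.1) ^ 2
            ∂((volume : Measure (Fin n → ℝ)).prod (volume : Measure ℝ))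
          = ∫ y in S, ∫ t in I, F (Fin.cons t y) ^ 2 := by
        exact MeasureTheory.setIntegral_prod _ hIntOn
      have hquad : ∀ y : Fin n → ℝ, ∫ t in I, F (Fin.cons t y) ^ 2
          = (π/2) * ∑ j : Fin 4, F (Fin.cons (((j:ℕ):ℝ) * (π/2)) y) ^ 2 := by
        intro y
        obtain ⟨a, b, c, habc⟩ := hF 0 (Fin.cons 0 y)
        have hcons : ∀ t : ℝ, F (Fin.cons t y) = a + b * Real.cos t + c * Real.sin t := by
          intro t
          have := habc t
          rwa [Fin.update_cons_zero] at this
        simp_rw [hcons]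
        rw [hI, quadint, ← quadsum a b c]
      simp_rw [key, hswap, hprod, hquad]
      -- now pull out constants and sums
      have hFj : ∀ j : Fin 4, ∫ y in S, F (Fin.cons (((j:ℕ):ℝ) * (π/2)) y) ^ 2
          = (π/2)^n * ∑ c : Fin n → Fin 4,
              F (Fin.cons (((j:ℕ):ℝ) * (π/2)) (fun i => ((c i : ℕ):ℝ) * (π/2))) ^ 2 := by
        intro j
        exact ih (fun y => F (Fin.cons (((j:ℕ):ℝ) * (π/2)) y))
          (hFc.comp (continuous_conspt n _))
          (by
            intro k φ
            obtain ⟨a, b, c, habc⟩ := hF k.succ (Fin.cons (((j:ℕ):ℝ) * (π/2)) φ)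
            refine ⟨a, b, c, fun t => ?_⟩
            show F (Fin.cons _ (Function.update φ k t)) = _
            rw [Fin.cons_update]; exact habc t)
      rw [MeasureTheory.integral_const_mul, MeasureTheory.integral_finset_sum]
      · simp_rw [hFj]
        rw [← Finset.mul_sum]
        rw [show ((π:ℝ)/2) * ((π/2)^n * ∑ j : Fin 4, ∑ c : Fin n → Fin 4,
            F (Fin.cons (((j:ℕ):ℝ) * (π/2)) (fun i => ((c i : ℕ):ℝ) * (π/2))) ^ 2)
          = (π/2)^(n+1) * ∑ j : Fin 4, ∑ c : Fin n → Fin 4,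
            F (Fin.cons (((j:ℕ):ℝ) * (π/2)) (fun i => ((c i : ℕ):ℝ) * (π/2))) ^ 2 by ring]
        congr 1
        have hre : ∑ d : Fin (n+1) → Fin 4, (F fun i => ((d i : ℕ):ℝ) * (π/2)) ^ 2
            = ∑ p : Fin 4 × (Fin n → Fin 4),
                F (Fin.cons (((p.1:ℕ):ℝ) * (π/2)) fun i => ((p.2 i : ℕ):ℝ) * (π/2)) ^ 2 := by
          apply Fintype.sum_equiv (Fin.consEquiv (fun _ : Fin (n+1) => Fin 4)).symm
          intro d
          have : (fun i => ((d i : ℕ):ℝ) * (π/2))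
              = Fin.cons (((d 0 : ℕ):ℝ) * (π/2)) (fun i => ((d i.succ : ℕ):ℝ) * (π/2)) := by
            ext i
            refine Fin.cases ?_ (fun i => ?_) i
            · simp
            · simp
          rw [this]
          rfl
        rw [hre, Fintype.sum_prod_type]
      · intro j _
        exact (((hFc.comp (continuous_conspt n _)).pow 2).continuousOn).integrableOn_compact
          (isCompact_univ_pi fun _ => isCompact_Icc)

lemma mod4_cos (a : ℕ) : Real.cos (((a % 4 : ℕ):ℝ) * (π/2)) = Real.cos ((a:ℝ) * (π/2)) ∧
    Real.sin (((a % 4 : ℕ):ℝ) * (π/2)) = Real.sin ((a:ℝ) * (π/2)) := by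
  have h : (a:ℝ) = ((a % 4 : ℕ):ℝ) + 4 * ((a / 4 : ℕ):ℝ) := by
    norm_cast
    omega
  rw [h]
  constructor
  · rw [show (((a % 4 : ℕ):ℝ) + 4 * ((a / 4 : ℕ):ℝ)) * (π/2)
      = ((a % 4 : ℕ):ℝ) * (π/2) + ((a / 4 : ℕ):ℝ) * (2 * π) by ring,
      Real.cos_add_nat_mul_two_pi]
  · rw [show (((a % 4 : ℕ):ℝ) + 4 * ((a / 4 : ℕ):ℝ)) * (π/2)
      = ((a % 4 : ℕ):ℝ) * (π/2) + ((a / 4 : ℕ):ℝ) * (2 * π) by ring,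
      Real.sin_add_nat_mul_two_pi]

open scoped Classical in
theorem stmt_19 (m : ℕ) (hm : 1 ≤ m) (ε : ℝ) (hε : 0 ≤ ε)
    (F : (Fin m → ℝ) → ℝ) (hFcont : Continuous F)
    (hF : ∀ (k : Fin m) (φ : Fin m → ℝ), ∃ a b c : ℝ, ∀ t : ℝ,
      F (Function.update φ k t) = a + b * Real.cos t + c * Real.sin t)
    (hclif : ∀ c : Fin m → Fin 4,
      F (fun k => ((c k : ℕ) : ℝ) * (Real.pi / 2)) = -1 ∨
      F (fun k => ((c k : ℕ) : ℝ) * (Real.pi / 2)) = 0 ∨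
      F (fun k => ((c k : ℕ) : ℝ) * (Real.pi / 2)) = 1)
    (hvar : (1 / (2 * Real.pi) ^ m) *
        ∫ φ in Set.univ.pi (fun _ : Fin m => Set.Icc (0:ℝ) (2 * Real.pi)), (F φ) ^ 2 ≤ ε)
    (k : Fin m)
    (G : (Fin m → ℝ) → ℝ)
    (hG : ∀ φ : Fin m → ℝ,
      G φ = (1 / 2) * F (φ + Pi.single k (Real.pi / 2))
        - (1 / 2) * F (φ - Pi.single k (Real.pi / 2))) :
    ((Finset.univ.filter (fun c : Fin m → Fin 4 =>
        G (fun j => ((c j : ℕ) : ℝ) * (Real.pi / 2)) ≠ 0)).card : ℝ) / 4 ^ m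
      ≤ 4 * ε := by
  have hπ : (0:ℝ) < π := Real.pi_pos
  set pt : (Fin m → Fin 4) → (Fin m → ℝ) := fun c => fun j => ((c j : ℕ) : ℝ) * (π / 2) with hpt
  -- Step A : discrete sum bound
  have hquadn := quadn m F hFcont hF
  have hsum_le : ∑ c : Fin m → Fin 4, F (pt c) ^ 2 ≤ ε * 4 ^ m := by
    rw [hquadn] at hvar
    have h4 : (0:ℝ) < 4 ^ m := by positivity
    have keyc : ((1:ℝ)/(2*π)^m) * ((π/2)^m * ∑ c : Fin m → Fin 4, F (pt c) ^ 2)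
        = (∑ c : Fin m → Fin 4, F (pt c) ^ 2) / 4 ^ m := by
      have hπm : (π:ℝ)^m ≠ 0 := by positivity
      have h2m : ((2:ℝ))^m ≠ 0 := by positivity
      rw [mul_pow, div_pow, show ((4:ℝ))^m = 2^m * 2^m by rw [← mul_pow]; norm_num]
      field_simp
    rw [keyc] at hvar
    calc ∑ c : Fin m → Fin 4, F (pt c) ^ 2
        = ((∑ c : Fin m → Fin 4, F (pt c) ^ 2) / 4 ^ m) * 4 ^ m := by field_simp
      _ ≤ ε * 4 ^ m := by
          apply mul_le_mul_of_nonneg_right hvar (le_of_lt h4)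
  -- Step B : points where F is nonzero
  have hptc : ∀ c : Fin m → Fin 4, (fun j => ((c j : ℕ) : ℝ) * (Real.pi / 2)) = pt c :=
    fun c => rfl
  have h4 : (0:ℝ) < 4 ^ m := by positivity
  set T : Finset (Fin m → Fin 4) := Finset.univ.filter (fun c => F (pt c) ≠ 0) with hT
  have hTcard : (T.card : ℝ) ≤ ε * 4 ^ m := by
    have h2 : ∑ c ∈ T, (1:ℝ) ≤ ∑ c ∈ T, F (pt c) ^ 2 := by
      apply Finset.sum_le_sum
      intro c hc
      rw [hT, Finset.mem_filter] at hc
      rcases hclif c with h | h | h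
      · rw [hptc c] at h; rw [h]; norm_num
      · rw [hptc c] at h; exact absurd h hc.2
      · rw [hptc c] at h; rw [h]; norm_num
    have h3 : ∑ c ∈ T, F (pt c) ^ 2 ≤ ∑ c : Fin m → Fin 4, F (pt c) ^ 2 :=
      Finset.sum_le_sum_of_subset_of_nonneg (Finset.subset_univ T)
        (fun i _ _ => sq_nonneg _)
    have h1 : (T.card : ℝ) = ∑ c ∈ T, (1:ℝ) := by simp
    linarith
  -- periodicity in coordinate k
  have hper : ∀ (φ : Fin m → ℝ) (s t : ℝ), Real.cos s = Real.cos t → Real.sin s = Real.sin t →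
      F (Function.update φ k s) = F (Function.update φ k t) := by
    intro φ s t h1 h2
    obtain ⟨a, b, c, h⟩ := hF k φ
    rw [h s, h t, h1, h2]
  have hplus : ∀ c : Fin m → Fin 4,
      F (pt c + Pi.single k (Real.pi/2)) = F (pt (Function.update c k (c k + 1))) := by
    intro c
    have h1 : pt c + Pi.single k (Real.pi/2)
        = Function.update (pt c) k (((c k : ℕ):ℝ) * (Real.pi/2) + Real.pi/2) := by
      funext j
      by_cases hj : j = k
      · subst hj; simp [pt]
      · simp [Function.update_of_ne hj, Pi.single_eq_of_ne hj]
    have h2 : pt (Function.update c k (c k + 1))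
        = Function.update (pt c) k ((((c k + 1 : Fin 4) : ℕ):ℝ) * (Real.pi/2)) := by
      funext j
      by_cases hj : j = k
      · subst hj; simp [pt]
      · simp [pt, Function.update_of_ne hj]
    rw [h1, h2]
    have hv : (((c k + 1 : Fin 4)) : ℕ) = ((c k : ℕ) + 1) % 4 := by
      have : ∀ v : Fin 4, ((v + 1 : Fin 4) : ℕ) = ((v : ℕ) + 1) % 4 := by decide
      exact this _
    have hang : (((c k : ℕ):ℝ) * (Real.pi/2) + Real.pi/2)
        = ((((c k : ℕ) + 1 : ℕ)):ℝ) * (Real.pi/2) := by push_cast; ring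
    rw [hang, hv]
    exact (hper _ _ _ (mod4_cos _).1 (mod4_cos _).2).symm
  have hminus : ∀ c : Fin m → Fin 4,
      F (pt c - Pi.single k (Real.pi/2)) = F (pt (Function.update c k (c k - 1))) := by
    intro c
    have h1 : pt c - Pi.single k (Real.pi/2)
        = Function.update (pt c) k (((c k : ℕ):ℝ) * (Real.pi/2) - Real.pi/2) := by
      funext j
      by_cases hj : j = k
      · subst hj; simp [pt]
      · simp [Function.update_of_ne hj, Pi.single_eq_of_ne hj]
    have h2 : pt (Function.update c k (c k - 1))
        = Function.update (pt c) k ((((c k - 1 : Fin 4) : ℕ):ℝ) * (Real.pi/2)) := by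
      funext j
      by_cases hj : j = k
      · subst hj; simp [pt]
      · simp [pt, Function.update_of_ne hj]
    rw [h1, h2]
    have hv : (((c k - 1 : Fin 4)) : ℕ) = ((c k : ℕ) + 3) % 4 := by
      have : ∀ v : Fin 4, ((v - 1 : Fin 4) : ℕ) = ((v : ℕ) + 3) % 4 := by decide
      exact this _
    have hang : ((((c k : ℕ) + 3 : ℕ)):ℝ) * (Real.pi/2)
        = (((c k : ℕ):ℝ) * (Real.pi/2) - Real.pi/2) + 2 * Real.pi := by push_cast; ring
    rw [hv]
    apply hper
    · rw [(mod4_cos _).1, hang, Real.cos_add_two_pi]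
    · rw [(mod4_cos _).2, hang, Real.sin_add_two_pi]
  have hGpt : ∀ c : Fin m → Fin 4, G (pt c) =
      (1/2) * F (pt (Function.update c k (c k + 1)))
      - (1/2) * F (pt (Function.update c k (c k - 1))) := by
    intro c
    rw [hG (pt c), hplus c, hminus c]
  -- counting
  set S : Finset (Fin m → Fin 4) := Finset.univ.filter (fun c => G (pt c) ≠ 0) with hS
  set fc : (Fin m → Fin 4) → (Fin m → Fin 4) := fun c =>
    if F (pt (Function.update c k (c k + 1))) ≠ 0 then Function.update c k (c k + 1)
    else Function.update c k (c k - 1) with hfc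
  have hmap : ∀ c ∈ S, fc c ∈ T := by
    intro c hc
    rw [hS, Finset.mem_filter] at hc
    rw [hT, Finset.mem_filter]
    refine ⟨Finset.mem_univ _, ?_⟩
    by_cases h : F (pt (Function.update c k (c k + 1))) ≠ 0
    · rw [hfc]; simp only [if_pos h]; exact h
    · rw [hfc]; simp only [if_neg h]
      push_neg at h
      intro h0
      apply hc.2
      rw [hGpt c, h, h0]
      ring
  have hfiber : ∀ d ∈ T, (S.filter (fun c => fc c = d)).card ≤ 2 := by
    intro d _
    have hsub : S.filter (fun c => fc c = d)
        ⊆ {Function.update d k (d k - 1), Function.update d k (d k + 1)} := by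
      intro c hc
      rw [Finset.mem_filter] at hc
      obtain ⟨-, hcd⟩ := hc
      replace hcd : (if F (pt (Function.update c k (c k + 1))) ≠ 0
          then Function.update c k (c k + 1) else Function.update c k (c k - 1)) = d := hcd
      simp only [Finset.mem_insert, Finset.mem_singleton]
      by_cases h : F (pt (Function.update c k (c k + 1))) ≠ 0
      · rw [if_pos h] at hcd
        left
        subst hcd
        simp [Function.update_idem, add_sub_cancel_right, Function.update_eq_self]
      · rw [if_neg h] at hcd
        right
        subst hcd
        simp [Function.update_idem, sub_add_cancel, Function.update_eq_self]
    calc (S.filter (fun c => fc c = d)).card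
        ≤ ({Function.update d k (d k - 1), Function.update d k (d k + 1)} :
            Finset (Fin m → Fin 4)).card := Finset.card_le_card hsub
      _ ≤ 2 := Finset.card_insert_le _ _ |>.trans (by simp)
  have hcard : S.card ≤ 2 * T.card :=
    Finset.card_le_mul_card_image_of_maps_to hmap 2 hfiber
  have hgoal : ((Finset.univ.filter (fun c : Fin m → Fin 4 =>
      G (fun j => ((c j : ℕ) : ℝ) * (Real.pi / 2)) ≠ 0)).card : ℝ) = (S.card : ℝ) := by
    rw [hS]
  rw [hgoal, div_le_iff₀ h4]
  have h2 : (S.card : ℝ) ≤ 2 * (T.card : ℝ) := by exact_mod_cast hcard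
  have h5 : (0:ℝ) ≤ ε * 4 ^ m := mul_nonneg hε h4.le
  nlinarith
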